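/- For each integer k ≥ 0 define q_k(A) = ∫₀¹ (1−u)^k / √(A²−u) du, for real A > 1. Then the k-th derivative of q_k satisfies q_k^{(k)}(A) = (−1)^k · 2^{k+1} · k! / (k+1) · (A − √(A²−1))^{k+1}. -/

import Mathlib

open intervalIntegral Finset Set

noncomputable def cInt (m n : ℕ) : ℝ := ∫ s in (0:ℝ)..1, s ^ m * (1 - s) ^ n

lemma cInt_cont (m n : ℕ) : Continuous fun s : ℝ => s ^ m * (1 - s) ^ n := by
  continuity

lemma cInt_R1 (m n : ℕ) :
    (m + 1 : ℝ) * cInt m (n + 1) = (n + 1 : ℝ) * cInt (m + 1) n := by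
  have h : ∀ s ∈ Set.uIcc (0:ℝ) 1, HasDerivAt (fun s : ℝ => s ^ (m+1) * (1 - s) ^ (n+1))
      ((m+1 : ℝ) * s ^ m * (1-s)^(n+1) - (n+1 : ℝ) * (s ^ (m+1) * (1-s)^n)) s := by
    intro s _
    have h1 : HasDerivAt (fun s : ℝ => s ^ (m+1)) ((m+1 : ℝ) * s ^ m) s := by
      simpa using hasDerivAt_pow (m+1) s
    have h2 : HasDerivAt (fun s : ℝ => (1 - s) ^ (n+1)) (-((n+1 : ℝ) * (1-s)^n)) s := by
      have := ((hasDerivAt_pow (n+1) (1 - s)).comp s ((hasDerivAt_id s).const_sub 1))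
      simpa [Function.comp_def] using this
    have := h1.mul h2
    refine this.congr_deriv ?_
    push_cast
    ring
  have key := integral_eq_sub_of_hasDerivAt (a := (0:ℝ)) (b := 1)
      (f' := fun s => (m+1 : ℝ) * s ^ m * (1-s)^(n+1) - (n+1 : ℝ) * (s ^ (m+1) * (1-s)^n)) h (by
    apply Continuous.intervalIntegrable
    continuity)
  simp only [one_pow, sub_self, zero_pow, mul_zero, zero_mul, Nat.succ_ne_zero,
    ne_eq, not_false_iff] at key
  rw [intervalIntegral.integral_sub
    (by apply Continuous.intervalIntegrable; continuity)
    (by apply Continuous.intervalIntegrable; continuity),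
    intervalIntegral.integral_const_mul] at key
  have e1 : (∫ (x : ℝ) in (0:ℝ)..1, (↑m + 1 : ℝ) * x ^ m * (1 - x) ^ (n + 1))
      = (m+1:ℝ) * cInt m (n+1) := by
    rw [cInt, ← intervalIntegral.integral_const_mul]
    apply intervalIntegral.integral_congr
    intro s _
    ring
  rw [e1, show (∫ (x : ℝ) in (0:ℝ)..1, x ^ (m+1) * (1 - x) ^ n) = cInt (m+1) n from rfl] at key
  linarith

lemma cInt_R2 (m n : ℕ) : cInt m (n + 1) = cInt m n - cInt (m + 1) n := by
  have : cInt m (n+1) = ∫ s in (0:ℝ)..1, (s ^ m * (1-s)^n - s ^ (m+1) * (1-s)^n) := by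
    rw [cInt]
    apply intervalIntegral.integral_congr
    intro s _
    ring
  rw [this, intervalIntegral.integral_sub ((cInt_cont m n).intervalIntegrable _ _)
    ((cInt_cont (m+1) n).intervalIntegrable _ _)]
  rfl

noncomputable def Phi (j n : ℕ) (y : ℝ) : ℝ :=
  ∑ i ∈ Finset.range (n + 1), (n.choose i : ℝ) * (-1) ^ i * cInt (j + i) n * y ^ (j + 1 + 2 * i)

noncomputable def Phi' (j n : ℕ) (y : ℝ) : ℝ :=
  ∑ i ∈ Finset.range (n + 1),
    (n.choose i : ℝ) * (-1) ^ i * cInt (j + i) n * ((j + 1 + 2 * i : ℕ) * y ^ (j + 2 * i))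

lemma hasDerivAt_Phi (j n : ℕ) (y : ℝ) : HasDerivAt (Phi j n) (Phi' j n y) y := by
  unfold Phi Phi'
  apply HasDerivAt.fun_sum
  intro i _
  have h := (hasDerivAt_pow (j + 1 + 2 * i) y).const_mul
    ((n.choose i : ℝ) * (-1) ^ i * cInt (j + i) n)
  have e : j + 1 + 2 * i - 1 = j + 2 * i := by omega
  rw [e] at h
  convert h using 1

lemma key_identity (j n : ℕ) (y : ℝ) :
    y ^ 2 * Phi' j (n + 1) y = ((n : ℝ) + 1) * (1 - y ^ 2) * Phi (j + 1) n y := by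
  unfold Phi'
  have split : ∀ i ∈ Finset.range (n + 2),
      ((n+1).choose i : ℝ) * (-1) ^ i * cInt (j + i) (n + 1) *
        ((j + 1 + 2 * i : ℕ) * y ^ (j + 2 * i)) * y ^ 2
      = (-1) ^ i * (((n+1 : ℕ) * n.choose i : ℕ) : ℝ) * cInt (j + i + 1) n * y ^ (j + 2 + 2 * i)
        + (-1) ^ i * ((i * (n+1).choose i : ℕ) : ℝ) * cInt (j + i) n * y ^ (j + 2 + 2 * i) := by
    intro i _
    have r1 : ((j:ℝ) + i + 1) * cInt (j + i) (n + 1) = ((n:ℝ) + 1) * cInt (j + i + 1) n := by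
      have := cInt_R1 (j + i) n
      push_cast at this ⊢
      linarith
    have r2 := cInt_R2 (j + i) n
    have choose_id : ((n:ℝ) + 1 - i) * ((n+1).choose i : ℝ) = ((n:ℝ) + 1) * (n.choose i : ℝ) := by
      rcases le_or_gt i (n+1) with hi | hi
      · have hc : (((n+1).choose i * (n + 1 - i) : ℕ) : ℝ) = ((n.choose i * (n+1) : ℕ) : ℝ) := by
          exact_mod_cast congrArg (Nat.cast : ℕ → ℝ) (Nat.choose_mul_succ_eq n i).symm
        push_cast [Nat.cast_sub hi] at hc
        linarith
      · simp [Nat.choose_eq_zero_of_lt hi, Nat.choose_eq_zero_of_lt (by omega : n < i)]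
    have hy : y ^ (j + 2 * i) * y ^ 2 = y ^ (j + 2 + 2 * i) := by
      rw [← pow_add, show j + 2 * i + 2 = j + 2 + 2 * i from by omega]
    have expand : ((n+1).choose i : ℝ) * ((j + 1 + 2*i : ℕ) : ℝ) * cInt (j+i) (n+1)
        = (((n+1:ℕ) * n.choose i : ℕ) : ℝ) * cInt (j + i + 1) n
          + ((i * (n+1).choose i : ℕ) : ℝ) * cInt (j + i) n := by
      push_cast
      linear_combination ((n+1).choose i : ℝ) * r1
        + (i:ℝ) * ((n+1).choose i : ℝ) * r2 + cInt (j+i+1) n * choose_id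
    calc ((n+1).choose i : ℝ) * (-1) ^ i * cInt (j + i) (n + 1) *
          ((j + 1 + 2 * i : ℕ) * y ^ (j + 2 * i)) * y ^ 2
        = (-1)^i * (((n+1).choose i : ℝ) * ((j + 1 + 2*i : ℕ) : ℝ) * cInt (j+i) (n+1))
          * y ^ (j + 2 + 2*i) := by rw [← hy]; ring
      _ = _ := by rw [expand]; ring
  rw [show y ^ 2 * (∑ i ∈ Finset.range (n + 1 + 1),
      ((n+1).choose i : ℝ) * (-1) ^ i * cInt (j + i) (n + 1) *
        ((j + 1 + 2 * i : ℕ) * y ^ (j + 2 * i)))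
    = ∑ i ∈ Finset.range (n + 2),
      (((n+1).choose i : ℝ) * (-1) ^ i * cInt (j + i) (n + 1) *
        ((j + 1 + 2 * i : ℕ) * y ^ (j + 2 * i)) * y ^ 2) from by
      rw [Finset.mul_sum]; apply Finset.sum_congr rfl; intro i _; ring]
  rw [Finset.sum_congr rfl split, Finset.sum_add_distrib]
  -- first sum: drop the vanishing top term, matches (n+1) * Phi (j+1) n y (first part)
  have s1 : ∑ i ∈ Finset.range (n + 2),
      (-1) ^ i * (((n+1 : ℕ) * n.choose i : ℕ) : ℝ) * cInt (j + i + 1) n * y ^ (j + 2 + 2 * i)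
      = ((n:ℝ)+1) * ∑ i ∈ Finset.range (n + 1),
          (n.choose i : ℝ) * (-1) ^ i * cInt (j + 1 + i) n * y ^ (j + 1 + 1 + 2 * i) := by
    rw [Finset.sum_range_succ, Nat.choose_succ_self]
    simp only [Nat.mul_zero, Nat.cast_zero, mul_zero, zero_mul, add_zero]
    rw [Finset.mul_sum]
    apply Finset.sum_congr rfl
    intro i _
    rw [show j + i + 1 = j + 1 + i from by omega, show j + 2 + 2*i = j + 1 + 1 + 2*i from by omega]
    push_cast
    ring
  have s2 : ∑ i ∈ Finset.range (n + 2),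
      (-1) ^ i * ((i * (n+1).choose i : ℕ) : ℝ) * cInt (j + i) n * y ^ (j + 2 + 2 * i)
      = -(((n:ℝ)+1) * y^2 * ∑ i ∈ Finset.range (n + 1),
          (n.choose i : ℝ) * (-1) ^ i * cInt (j + 1 + i) n * y ^ (j + 1 + 1 + 2 * i)) := by
    rw [Finset.sum_range_succ']
    simp only [Nat.zero_eq, Nat.mul_zero, zero_mul, Nat.cast_zero, mul_zero, zero_mul, add_zero]
    rw [Finset.mul_sum, ← Finset.sum_neg_distrib]
    apply Finset.sum_congr rfl
    intro i _
    have ch : ((i+1) * (n+1).choose (i+1) : ℕ) = ((n+1) * n.choose i : ℕ) := by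
      rw [mul_comm (i+1), ← Nat.add_one_mul_choose_eq]
    rw [show j + (i+1) = j + 1 + i from by omega, ch,
      show j + 2 + 2*(i+1) = (j + 1 + 1 + 2*i) + 2 from by omega, pow_add]
    push_cast
    ring
  rw [s1, s2]
  unfold Phi
  ring


noncomputable def xx (B : ℝ) : ℝ := B - Real.sqrt (B ^ 2 - 1)

lemma xx_facts {B : ℝ} (hB : 1 < B) :
    0 < xx B ∧ xx B < 1 ∧ 1 + xx B ^ 2 = 2 * B * xx B ∧ 0 < Real.sqrt (B ^ 2 - 1) := by
  have h1 : (0:ℝ) < B ^ 2 - 1 := by nlinarith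
  have hb : 0 < Real.sqrt (B ^ 2 - 1) := Real.sqrt_pos.2 h1
  have hb2 : Real.sqrt (B ^ 2 - 1) ^ 2 = B ^ 2 - 1 := Real.sq_sqrt h1.le
  have hlt : Real.sqrt (B ^ 2 - 1) < B := by
    nlinarith [Real.sqrt_nonneg (B ^ 2 - 1)]
  refine ⟨by simp [xx]; linarith, ?_, by simp only [xx]; nlinarith, hb⟩
  have : B - 1 < Real.sqrt (B ^ 2 - 1) := by
    nlinarith [Real.sqrt_nonneg (B ^ 2 - 1)]
  simp only [xx]; linarith

lemma qk_base (k : ℕ) (B : ℝ) (hB : 1 < B) :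
    (∫ u in (0:ℝ)..1, (1 - u) ^ k / Real.sqrt (B ^ 2 - u)) = 2 * Phi 0 k (xx B) := by
  obtain ⟨hx0, hx1, hquad, hb⟩ := xx_facts hB
  set x := xx B with hxdef
  set f : ℝ → ℝ := fun s => (1 + x ^ 2) * s - x ^ 2 * s ^ 2 with hf
  set g : ℝ → ℝ := fun u => (1 - u) ^ k / Real.sqrt (B ^ 2 - u) with hg
  have hB' : (1 + x^2) = 2 * B * x := hquad
  have hBx : B = (1 + x^2) / (2 * x) := by field_simp; linarith
  have himg : ∀ s ∈ uIcc (0:ℝ) 1, f s ∈ Icc (0:ℝ) 1 := by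
    intro s hs
    rw [Set.uIcc_of_le (by norm_num : (0:ℝ) ≤ 1)] at hs
    obtain ⟨hs0, hs1⟩ := hs
    have hx2 : x ^ 2 < 1 := by nlinarith
    constructor
    · simp only [hf]
      nlinarith [mul_nonneg hs0 (mul_nonneg (sq_nonneg x) (sub_nonneg.2 hs1))]
    · simp only [hf]
      nlinarith [mul_nonneg (sub_nonneg.2 hs1)
        (show (0:ℝ) ≤ 1 - x^2*s from by nlinarith [mul_nonneg (by nlinarith : (0:ℝ) ≤ 1 - x^2) hs0])]
  have hgcont : ContinuousOn g (Icc (0:ℝ) 1) := by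
    apply ContinuousOn.div
    · fun_prop
    · fun_prop
    · intro u hu
      have : 0 < B ^ 2 - u := by
        obtain ⟨h0, h1⟩ := hu; nlinarith
      positivity
  have hderiv : ∀ s ∈ uIcc (0:ℝ) 1, HasDerivAt f ((1 + x^2) - 2 * x^2 * s) s := by
    intro s _
    have h1 : HasDerivAt (fun s : ℝ => (1 + x^2) * s) (1 + x^2) s := by
      simpa using (hasDerivAt_id s).const_mul (1 + x^2)
    have h2 : HasDerivAt (fun s : ℝ => x^2 * s^2) (x^2 * (2*s)) s := by
      have := (hasDerivAt_pow 2 s).const_mul (x^2)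
      simpa using this
    have h3 := h1.sub h2
    refine h3.congr_deriv ?_
    ring
  have hcv := integral_comp_mul_deriv' (f := f) (f' := fun s => (1 + x^2) - 2 * x^2 * s)
    (g := g) (a := 0) (b := 1) hderiv (by fun_prop)
    (hgcont.mono (by
      intro u hu
      obtain ⟨s, hs, rfl⟩ := hu
      exact himg s hs))
  have hf0 : f 0 = 0 := by simp [hf]
  have hf1 : f 1 = 1 := by simp only [hf]; ring
  rw [hf0, hf1] at hcv
  rw [show (∫ u in (0:ℝ)..1, (1 - u) ^ k / Real.sqrt (B ^ 2 - u)) = ∫ u in (0:ℝ)..1, g u from rfl,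
    ← hcv]
  -- now pointwise computation on [0,1]
  have hpt : ∀ s ∈ uIcc (0:ℝ) 1, (g ∘ f) s * ((1 + x^2) - 2 * x^2 * s)
      = ∑ i ∈ Finset.range (k+1),
          (2 * (k.choose i : ℝ) * (-1)^i * x ^ (1 + 2*i)) * (s ^ i * (1-s) ^ k) := by
    intro s hs
    rw [Set.uIcc_of_le (by norm_num : (0:ℝ) ≤ 1)] at hs
    obtain ⟨hs0, hs1⟩ := hs
    have hnum : 0 < 1 + x^2 - 2*x^2*s := by nlinarith
    have hsq : Real.sqrt (B ^ 2 - f s) = (1 + x^2 - 2*x^2*s) / (2*x) := by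
      rw [show B ^ 2 - f s = ((1 + x^2 - 2*x^2*s) / (2*x)) ^ 2 from by
        have hxne : x ≠ 0 := ne_of_gt hx0
        rw [hBx]
        simp only [hf]
        field_simp
        ring]
      exact Real.sqrt_sq (by positivity)
    have h1f : 1 - f s = (1 - s) * (1 - x^2 * s) := by simp only [hf]; ring
    have hgf : (g ∘ f) s * ((1 + x^2) - 2 * x^2 * s)
        = 2 * x * ((1-s) * (1 - x^2*s)) ^ k := by
      simp only [Function.comp, hg, hsq, h1f]
      have hxne : x ≠ 0 := ne_of_gt hx0
      have hnne := hnum.ne'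
      rw [div_div_eq_mul_div, div_mul_cancel₀ _ hnne]
      ring
    rw [hgf]
    -- binomial expansion
    rw [mul_pow, show (1 - x^2 * s) = (1 + (-(x^2 * s))) from by ring, add_comm,
      add_pow]
    rw [Finset.mul_sum, Finset.mul_sum]
    apply Finset.sum_congr rfl
    intro i _
    have e1 : (-(x^2*s))^i = (-1)^i * x^(2*i) * s^i := by
      rw [show -(x^2*s) = (-1) * (x^2*s) from by ring, mul_pow, mul_pow, ← pow_mul]; ring
    rw [e1, one_pow, show x^(1+2*i) = x * x^(2*i) from by rw [pow_add, pow_one]]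
    ring
  rw [integral_congr hpt, integral_finset_sum (fun i _ => by
    apply Continuous.intervalIntegrable; fun_prop)]
  unfold Phi
  rw [Finset.mul_sum]
  apply Finset.sum_congr rfl
  intro i _
  rw [integral_const_mul,
    show (∫ s in (0:ℝ)..1, s ^ i * (1-s)^k) = cInt i k from rfl]
  rw [show (0:ℕ) + i = i from by omega, show 0 + 1 + 2*i = 1 + 2*i from by omega]
  ring

lemma hasDerivAt_xx {B : ℝ} (hB : 1 < B) :
    HasDerivAt xx (1 - B / Real.sqrt (B ^ 2 - 1)) B := by
  have h1 : (0:ℝ) < B ^ 2 - 1 := by nlinarith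
  have hs : HasDerivAt (fun B : ℝ => B ^ 2 - 1) (2 * B) B := by
    simpa using (hasDerivAt_pow 2 B).sub_const 1
  have h2 := hs.sqrt (ne_of_gt h1)
  have h3 := (hasDerivAt_id B).sub h2
  refine h3.congr_deriv ?_
  have hb : Real.sqrt (B ^ 2 - 1) ≠ 0 := by positivity
  field_simp

lemma qk_main (k : ℕ) : ∀ j, j ≤ k → ∀ B : ℝ, 1 < B →
    iteratedDeriv j (fun B : ℝ => ∫ u in (0:ℝ)..1, (1 - u) ^ k / Real.sqrt (B ^ 2 - u)) B
      = 2 * (-2 : ℝ) ^ j * (k.descFactorial j : ℝ) * Phi j (k - j) (xx B) := by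
  intro j
  induction j with
  | zero =>
    intro _ B hB
    simpa [iteratedDeriv_zero] using qk_base k B hB
  | succ j ih =>
    intro hj B hB
    rw [iteratedDeriv_succ]
    have heq : iteratedDeriv j
        (fun B : ℝ => ∫ u in (0:ℝ)..1, (1 - u) ^ k / Real.sqrt (B ^ 2 - u))
        =ᶠ[nhds B] fun B' => 2 * (-2 : ℝ) ^ j * (k.descFactorial j : ℝ) * Phi j (k - j) (xx B') := by
      filter_upwards [isOpen_Ioi.mem_nhds (show B ∈ Set.Ioi (1:ℝ) from hB)] with B' hB'
      exact ih (by omega) B' hB'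
    rw [heq.deriv_eq]
    have hD : HasDerivAt
        (fun B' => 2 * (-2 : ℝ) ^ j * (k.descFactorial j : ℝ) * Phi j (k - j) (xx B'))
        (2 * (-2 : ℝ) ^ j * (k.descFactorial j : ℝ) *
          (Phi' j (k - j) (xx B) * (1 - B / Real.sqrt (B ^ 2 - 1)))) B := by
      exact (((hasDerivAt_Phi j (k - j) (xx B)).comp B (hasDerivAt_xx hB)).const_mul _)
    rw [hD.deriv]
    obtain ⟨hx0, hx1, hquad, hb⟩ := xx_facts hB
    set b := Real.sqrt (B ^ 2 - 1) with hbdef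
    set n := k - (j + 1) with hndef
    have hkj : k - j = n + 1 := by omega
    have hbx : B - xx B = b := by simp [xx, hbdef]
    have h1x : 1 - xx B ^ 2 = 2 * xx B * b := by linear_combination hquad + 2 * (xx B) * hbx
    have hbne : b ≠ 0 := ne_of_gt hb
    have hxne : xx B ≠ 0 := ne_of_gt hx0
    have hPhi' : Phi' j (n + 1) (xx B) * xx B = 2 * ((n : ℝ) + 1) * Phi (j + 1) n (xx B) * b := by
      have h := key_identity j n (xx B)
      rw [h1x] at h
      apply mul_left_cancel₀ hxne
      linear_combination h
    have hstep : Phi' j (k - j) (xx B) * (1 - B / b)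
        = -2 * ((n : ℝ) + 1) * Phi (j + 1) n (xx B) := by
      rw [hkj]
      have hdiv : 1 - B / b = -(xx B) / b := by
        field_simp
        linear_combination -hbx
      rw [hdiv]
      field_simp
      linear_combination -hPhi'
    rw [hstep]
    have hdFs : (k.descFactorial (j + 1) : ℝ) = ((n : ℝ) + 1) * (k.descFactorial j : ℝ) := by
      rw [Nat.descFactorial_succ]
      push_cast
      rw [show ((k - j : ℕ) : ℝ) = (n : ℝ) + 1 from by rw [hkj]; push_cast; ring]
    rw [hdFs]
    ring

/-- For `q_k(A) = ∫₀¹ (1-u)^k / √(A²-u) du` and `A > 1`, the `k`-th derivative satisfies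
`q_k^{(k)}(A) = (-1)^k 2^{k+1} k! / (k+1) · (A - √(A²-1))^{k+1}`. -/
theorem qk_iteratedDeriv (k : ℕ) (A : ℝ) (hA : 1 < A) :
    iteratedDeriv k (fun B : ℝ => ∫ u in (0:ℝ)..1, (1 - u) ^ k / Real.sqrt (B ^ 2 - u)) A
      = (-1) ^ k * 2 ^ (k + 1) * (Nat.factorial k : ℝ) / (k + 1)
          * (A - Real.sqrt (A ^ 2 - 1)) ^ (k + 1) := by
  have h := qk_main k k le_rfl A hA
  rw [h, Nat.sub_self, Nat.descFactorial_self]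
  have hPhi : Phi k 0 (xx A) = (1 / ((k : ℝ) + 1)) * (xx A) ^ (k + 1) := by
    unfold Phi
    rw [Finset.sum_range_one]
    have hc : cInt k 0 = 1 / ((k : ℝ) + 1) := by
      unfold cInt
      rw [show (∫ s in (0:ℝ)..1, s ^ k * (1 - s) ^ 0) = ∫ s in (0:ℝ)..1, s ^ k from by
        apply intervalIntegral.integral_congr; intro s _; simp]
      rw [integral_pow]
      push_cast
      norm_num
    norm_num [hc]
  rw [hPhi]
  have h2 : ((-2 : ℝ)) ^ k = (-1) ^ k * 2 ^ k := by
    rw [← neg_one_mul, mul_pow]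
  rw [h2, show xx A = A - Real.sqrt (A ^ 2 - 1) from rfl]
  ring
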